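/- Let B be a ring and M an Armendariz right B-module with B ⊆ M. Then M is a Baer module over B if and only if the polynomial module M[x] is a Baer module over B[x]. -/

import Mathlib

open Polynomial MulOpposite

/-- The polynomial module `M[x]` over `Bᵐᵒᵖ[X]`, for a right `B`-module `M`
(encoded as a left `Bᵐᵒᵖ`-module). -/
noncomputable def polyModAux (B : Type*) [Ring B] (M : Type*) [AddCommGroup M]
    [Module Bᵐᵒᵖ M] : Module (Polynomial Bᵐᵒᵖ) (ℕ →₀ M) :=
  Module.compHom _
    (Polynomial.eval₂RingHom' (Module.toAddMonoidEnd Bᵐᵒᵖ (ℕ →₀ M))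
      (Finsupp.mapDomain.addMonoidHom Nat.succ : AddMonoid.End (ℕ →₀ M))
      (fun a => AddMonoidHom.ext fun p => (Finsupp.mapDomain_smul a p).symm))

/-- `M[x]` as a right `B[x]`-module, i.e. a left module over `(B[x])ᵐᵒᵖ`. -/
noncomputable def polyModOp (B : Type*) [Ring B] (M : Type*) [AddCommGroup M]
    [Module Bᵐᵒᵖ M] : Module (Polynomial B)ᵐᵒᵖ (ℕ →₀ M) :=
  letI := polyModAux B M
  Module.compHom _ (Polynomial.opRingEquiv B).toRingHom

/-- The right action `m(x) · f(x)` of `B[x]` on the polynomial module `M[x]`. -/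
noncomputable def rsmul (B : Type*) [Ring B] (M : Type*) [AddCommGroup M]
    [Module Bᵐᵒᵖ M] (p : ℕ →₀ M) (f : Polynomial B) : ℕ →₀ M := by
  letI := polyModOp B M
  exact op f • p

/-- The annihilator in `S` of a subset `X` of a right `S`-module `N`:
`ann_S(X) = {r : S | Xr = 0}`. -/
def rAnn (S : Type*) [Ring S] {N : Type*} [AddCommGroup N] [Module Sᵐᵒᵖ N]
    (X : Set N) : Set S :=
  {r : S | ∀ x ∈ X, op r • x = 0}

/-- `C` is the right ideal `eS` generated by an idempotent `e` of `S`. -/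
def IsIdempotentGenerated (S : Type*) [Ring S] (C : Set S) : Prop :=
  ∃ e : S, e * e = e ∧ C = {x : S | ∃ b : S, x = e * b}

/-- A right `B`-module `M` is Armendariz if `m(x) f(x) = 0` implies `m_i b_j = 0` for all
coefficients `m_i` of `m(x)` and `b_j` of `f(x)`. -/
def RArmendariz (B : Type*) [Ring B] (M : Type*) [AddCommGroup M] [Module Bᵐᵒᵖ M] : Prop :=
  ∀ (p : ℕ →₀ M) (f : Polynomial B), rsmul B M p f = 0 →
    ∀ i j : ℕ, op (f.coeff j) • p i = 0

/-- A right `S`-module `N` is Baer if the annihilator of every subset of `N` is generated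
by an idempotent. -/
def IsBaerMod (S : Type*) [Ring S] (N : Type*) [AddCommGroup N] [Module Sᵐᵒᵖ N] : Prop :=
  ∀ X : Set N, IsIdempotentGenerated S (rAnn S X)


noncomputable def shiftE (M : Type*) [AddCommMonoid M] : AddMonoid.End (ℕ →₀ M) :=
  Finsupp.mapDomain.addMonoidHom Nat.succ

theorem coeff_opRE {R : Type*} [Semiring R] (f : R[X]) (j : ℕ) :
    (opRingEquiv R (op f)).coeff j = op (f.coeff j) := by
  induction f using Polynomial.induction_on' with
  | add p q hp hq => simp [hp, hq]
  | monomial n a => simp [coeff_monomial]; split_ifs <;> simp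

theorem smul_pow_shift {B : Type*} [Ring B] {M : Type*} [AddCommGroup M] [Module Bᵐᵒᵖ M]
    (j : ℕ) (a : Bᵐᵒᵖ) (p : ℕ →₀ M) :
    a • (shiftE M ^ j) p = (shiftE M ^ j) (a • p) := by
  induction j generalizing p with
  | zero => simp
  | succ j ih =>
      rw [pow_succ']
      show a • shiftE M ((shiftE M ^ j) p) = shiftE M ((shiftE M ^ j) (a • p))
      rw [← ih]
      exact (Finsupp.mapDomain_smul a _).symm

theorem rsmul_eq_zero_of {B : Type*} [Ring B] {M : Type*} [AddCommGroup M] [Module Bᵐᵒᵖ M]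
    (p : ℕ →₀ M) (f : Polynomial B) (h : ∀ i j, op (f.coeff j) • p i = 0) :
    rsmul B M p f = 0 := by
  have hq : ∀ j, op (f.coeff j) • p = 0 := fun j =>
    Finsupp.ext fun i => by rw [Finsupp.smul_apply]; exact h i j
  show Polynomial.eval₂ (Module.toAddMonoidEnd Bᵐᵒᵖ (ℕ →₀ M)) (shiftE M)
      (Polynomial.opRingEquiv B (op f)) p = 0
  rw [Polynomial.eval₂_eq_sum, Polynomial.sum]
  rw [show ∀ (s : Finset ℕ) (g : ℕ → AddMonoid.End (ℕ →₀ M)), (∑ n ∈ s, g n) p = ∑ n ∈ s, g n p from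
    fun s g => AddMonoidHom.finset_sum_apply g s p]
  apply Finset.sum_eq_zero
  intro j _
  show (Module.toAddMonoidEnd Bᵐᵒᵖ (ℕ →₀ M) ((opRingEquiv B (op f)).coeff j))
      ((shiftE M ^ j) p) = 0
  rw [coeff_opRE]
  show op (f.coeff j) • (shiftE M ^ j) p = 0
  rw [smul_pow_shift, hq, map_zero]

/-- If `M` is an Armendariz right `B`-module with `B ⊆ M`, then `M` is a Baer module over
`B` if and only if `M[x]` is a Baer module over `B[x]`. -/
theorem stmt15 {B : Type*} [Ring B] {M : Type*} [AddCommGroup M] [Module Bᵐᵒᵖ M]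
    (ι : B →ₗ[Bᵐᵒᵖ] M) (hι : Function.Injective ι)
    (hArm : RArmendariz B M) :
    letI := polyModOp B M
    (IsBaerMod B M ↔ IsBaerMod (Polynomial B) (ℕ →₀ M)) := by
  letI := polyModOp B M
  constructor
  · -- M Baer ⇒ M[x] Baer
    intro hB Y
    obtain ⟨e, he, hann⟩ := hB {m | ∃ p ∈ Y, ∃ i, p i = m}
    have heX : ∀ m, (∃ p ∈ Y, ∃ i, p i = m) → op e • m = 0 := by
      intro m hm
      have : e ∈ rAnn B {m | ∃ p ∈ Y, ∃ i, p i = m} := by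
        rw [hann]; exact ⟨e, he.symm⟩
      exact this m hm
    refine ⟨C e, by rw [← C_mul, he], ?_⟩
    ext f
    constructor
    · intro hf
      have hcoeff : ∀ j, ∃ b, f.coeff j = e * b := by
        intro j
        have : f.coeff j ∈ rAnn B {m | ∃ p ∈ Y, ∃ i, p i = m} := by
          rintro m ⟨p, hp, i, rfl⟩
          exact hArm p f (hf p hp) i j
        rw [hann] at this; exact this
      refine ⟨f, ?_⟩
      ext j
      rw [coeff_C_mul]
      obtain ⟨b, hb⟩ := hcoeff j
      rw [hb, ← mul_assoc, he]
    · rintro ⟨g, rfl⟩ p hp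
      show rsmul B M p (C e * g) = 0
      apply rsmul_eq_zero_of
      intro i j
      rw [coeff_C_mul, op_mul, mul_smul, heX (p i) ⟨p, hp, i, rfl⟩, smul_zero]
  · -- M[x] Baer ⇒ M Baer
    intro hBx X
    obtain ⟨E, hE, hann⟩ := hBx {q | ∃ m ∈ X, q = Finsupp.single 0 m}
    have hE0 : ∀ m ∈ X, op (E.coeff 0) • m = 0 := by
      intro m hm
      have hEmem : E ∈ rAnn (Polynomial B) {q | ∃ m ∈ X, q = Finsupp.single 0 m} := by
        rw [hann]; exact ⟨E, hE.symm⟩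
      have h0 : rsmul B M (Finsupp.single 0 m) E = 0 :=
        hEmem (Finsupp.single 0 m) ⟨m, hm, rfl⟩
      have := hArm _ _ h0 0 0
      rwa [Finsupp.single_eq_same] at this
    refine ⟨E.coeff 0, by rw [← mul_coeff_zero, hE], ?_⟩
    ext b
    constructor
    · intro hb
      have hCb : C b ∈ rAnn (Polynomial B) {q | ∃ m ∈ X, q = Finsupp.single 0 m} := by
        rintro q ⟨m, hm, rfl⟩
        show rsmul B M (Finsupp.single 0 m) (C b) = 0
        apply rsmul_eq_zero_of
        intro i j
        rw [coeff_C]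
        split_ifs with h
        · rcases Nat.eq_zero_or_pos i with hi | hi
          · subst hi; rw [Finsupp.single_eq_same]; exact hb m hm
          · rw [Finsupp.single_eq_of_ne (by omega), smul_zero]
        · rw [op_zero, zero_smul]
      rw [hann] at hCb
      obtain ⟨g, hg⟩ := hCb
      refine ⟨g.coeff 0, ?_⟩
      have := congrArg (fun q => Polynomial.coeff q 0) hg
      simpa [mul_coeff_zero] using this
    · rintro ⟨c, rfl⟩ m hm
      show op (E.coeff 0 * c) • m = 0
      rw [op_mul, mul_smul, hE0 m hm, smul_zero]
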